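/- The truncated Gaussian CDF F^{[a,b]}_{μ,σ²}(x) = (Φ((x−μ)/σ) − Φ((a−μ)/σ)) / (Φ((b−μ)/σ) − Φ((a−μ)/σ)) is, for fixed x ∈ (a,b), σ > 0, and a < b, a strictly decreasing function of μ. -/

import Mathlib

open MeasureTheory ProbabilityTheory

section Aux
open Real

noncomputable def phi : ℝ → ℝ := gaussianPDFReal 0 1

lemma phi_def : phi = fun s => (Real.sqrt (2 * π))⁻¹ * Real.exp (- s^2 / 2) := by
  ext s; simp [phi, gaussianPDFReal]

lemma phi_pos (s : ℝ) : 0 < phi s := gaussianPDFReal_pos 0 1 s one_ne_zero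

lemma phi_cont : Continuous phi := by
  rw [phi_def]; fun_prop

lemma phi_integrable : Integrable phi := integrable_gaussianPDFReal 0 1

lemma phi_hasDeriv (s : ℝ) : HasDerivAt phi (-s * phi s) s := by
  have h : HasDerivAt (fun t : ℝ => (Real.sqrt (2 * π))⁻¹ * Real.exp (- t^2 / 2))
      (-s * ((Real.sqrt (2 * π))⁻¹ * Real.exp (- s^2 / 2))) s := by
    have h1 : HasDerivAt (fun t : ℝ => - t^2 / 2) (-s) s := by
      have := ((hasDerivAt_pow 2 s).neg).div_const 2
      exact this.congr_deriv (by ring)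
    have := (h1.exp).const_mul (Real.sqrt (2 * π))⁻¹
    exact this.congr_deriv (by ring)
  rw [phi_def]; simpa using h

lemma cdf_eq (t : ℝ) : ProbabilityTheory.cdf (gaussianReal 0 1) t = ∫ s in Set.Iic t, phi s := by
  rw [cdf_eq_real, measureReal_def, gaussianReal_apply_eq_integral 0 one_ne_zero,
    ENNReal.toReal_ofReal (setIntegral_nonneg measurableSet_Iic fun s _ => gaussianPDFReal_nonneg 0 1 s)]
  rfl

lemma cdf_sub (u v : ℝ) :
    ProbabilityTheory.cdf (gaussianReal 0 1) v - ProbabilityTheory.cdf (gaussianReal 0 1) u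
      = ∫ s in u..v, phi s := by
  rw [cdf_eq, cdf_eq, intervalIntegral.integral_Iic_sub_Iic
    phi_integrable.integrableOn phi_integrable.integrableOn]

lemma cdf_hasDeriv (t : ℝ) :
    HasDerivAt (ProbabilityTheory.cdf (gaussianReal 0 1)) (phi t) t := by
  have h : HasDerivAt (fun u => ∫ s in (0:ℝ)..u, phi s) (phi t) t :=
    intervalIntegral.integral_hasDerivAt_right (phi_integrable.intervalIntegrable)
      (phi_cont.aestronglyMeasurable.stronglyMeasurableAtFilter)
      phi_cont.continuousAt
  have : (fun u => ∫ s in (0:ℝ)..u, phi s)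
      = fun u => ProbabilityTheory.cdf (gaussianReal 0 1) u
        - ProbabilityTheory.cdf (gaussianReal 0 1) 0 := by
    ext u; rw [cdf_sub]
  rw [this] at h
  simpa using h.add_const (ProbabilityTheory.cdf (gaussianReal 0 1) 0)

lemma key_ineq {u v w : ℝ} (huv : u < v) (hvw : v < w) :
    (∫ s in u..v, phi s) * (phi w - phi v) < (∫ s in v..w, phi s) * (phi v - phi u) := by
  have hN : 0 < ∫ s in u..v, phi s :=
    intervalIntegral.intervalIntegral_pos_of_pos phi_integrable.intervalIntegrable phi_pos huv
  have hM : 0 < ∫ s in v..w, phi s :=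
    intervalIntegral.intervalIntegral_pos_of_pos phi_integrable.intervalIntegrable phi_pos hvw
  have hcont : Continuous fun s : ℝ => -s * phi s := by
    exact (continuous_neg.comp continuous_id).mul phi_cont
  have hwv : phi w - phi v = ∫ s in v..w, -s * phi s :=
    (intervalIntegral.integral_eq_sub_of_hasDerivAt (fun s _ => phi_hasDeriv s)
      (hcont.intervalIntegrable _ _)).symm
  have hvu : phi v - phi u = ∫ s in u..v, -s * phi s :=
    (intervalIntegral.integral_eq_sub_of_hasDerivAt (fun s _ => phi_hasDeriv s)
      (hcont.intervalIntegrable _ _)).symm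
  have h1 : (∫ s in v..w, -s * phi s) < ∫ s in v..w, -v * phi s := by
    apply intervalIntegral.integral_lt_integral_of_continuousOn_of_le_of_exists_lt hvw
      hcont.continuousOn (continuous_const.mul phi_cont).continuousOn
    · intro s hs
      have : -s ≤ -v := by linarith [hs.1]
      exact mul_le_mul_of_nonneg_right this (phi_pos s).le
    · exact ⟨w, Set.right_mem_Icc.2 hvw.le,
        mul_lt_mul_of_pos_right (by linarith) (phi_pos w)⟩
  have h2 : (∫ s in u..v, -v * phi s) < ∫ s in u..v, -s * phi s := by
    apply intervalIntegral.integral_lt_integral_of_continuousOn_of_le_of_exists_lt huv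
      (continuous_const.mul phi_cont).continuousOn hcont.continuousOn
    · intro s hs
      have : -v ≤ -s := by linarith [hs.2]
      exact mul_le_mul_of_nonneg_right this (phi_pos s).le
    · exact ⟨u, Set.left_mem_Icc.2 huv.le,
        mul_lt_mul_of_pos_right (by linarith) (phi_pos u)⟩
  rw [intervalIntegral.integral_const_mul] at h1 h2
  nlinarith [mul_lt_mul_of_pos_left h1 hN, mul_lt_mul_of_pos_left h2 hM,
    hwv, hvu]

end Aux

/-- The truncated Gaussian CDF at a fixed point `x ∈ (a,b)` is strictly decreasing
as a function of the mean parameter `μ`. -/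
theorem truncated_gaussian_cdf_strictAnti_in_mean
    (Φ : ℝ → ℝ) (hΦ : Φ = fun t => ProbabilityTheory.cdf (gaussianReal 0 1) t)
    (a b x σ : ℝ) (hσ : 0 < σ) (hab : a < b) (hax : a < x) (hxb : x < b) :
    StrictAnti (fun m : ℝ =>
      (Φ ((x - m)/σ) - Φ ((a - m)/σ)) / (Φ ((b - m)/σ) - Φ ((a - m)/σ))) := by
  subst hΦ
  set F : ℝ → ℝ := fun t => ProbabilityTheory.cdf (gaussianReal 0 1) t with hF
  apply strictAnti_of_deriv_neg
  intro m
  set u : ℝ := (a - m)/σ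
  set v : ℝ := (x - m)/σ
  set w : ℝ := (b - m)/σ
  have huv : u < v := (div_lt_div_iff_of_pos_right hσ).mpr (by linarith)
  have hvw : v < w := (div_lt_div_iff_of_pos_right hσ).mpr (by linarith)
  -- derivatives of each piece
  have hderiv : ∀ c : ℝ, HasDerivAt (fun m' : ℝ => F ((c - m')/σ))
      (phi ((c - m)/σ) * (-1/σ)) m := by
    intro c
    have hin : HasDerivAt (fun m' : ℝ => (c - m')/σ) (-1/σ) m := by
      have := ((hasDerivAt_id m).const_sub c).div_const σ
      simpa using this
    exact (cdf_hasDeriv ((c - m)/σ)).comp m hin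
  have hNd : HasDerivAt (fun m' : ℝ => F ((x - m')/σ) - F ((a - m')/σ))
      ((phi v - phi u) * (-1/σ)) m := by
    have := (hderiv x).sub (hderiv a)
    exact this.congr_deriv (by ring)
  have hDd : HasDerivAt (fun m' : ℝ => F ((b - m')/σ) - F ((a - m')/σ))
      ((phi w - phi u) * (-1/σ)) m := by
    have := (hderiv b).sub (hderiv a)
    exact this.congr_deriv (by ring)
  have hN : F v - F u = ∫ s in u..v, phi s := cdf_sub u v
  have hM : F w - F v = ∫ s in v..w, phi s := cdf_sub v w
  have hNpos : 0 < F v - F u := by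
    rw [hN]
    exact intervalIntegral.intervalIntegral_pos_of_pos phi_integrable.intervalIntegrable phi_pos huv
  have hMpos : 0 < F w - F v := by
    rw [hM]
    exact intervalIntegral.intervalIntegral_pos_of_pos phi_integrable.intervalIntegrable phi_pos hvw
  have hDpos : 0 < F w - F u := by linarith
  have hfd : HasDerivAt (fun m' : ℝ =>
      (F ((x - m')/σ) - F ((a - m')/σ)) / (F ((b - m')/σ) - F ((a - m')/σ)))
      (((phi v - phi u) * (-1/σ) * (F w - F u)
        - (F v - F u) * ((phi w - phi u) * (-1/σ))) / (F w - F u)^2) m :=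
    hNd.div hDd hDpos.ne'
  rw [hfd.deriv]
  apply div_neg_of_neg_of_pos _ (by positivity)
  have hkey : (∫ s in u..v, phi s) * (phi w - phi v)
      < (∫ s in v..w, phi s) * (phi v - phi u) := key_ineq huv hvw
  rw [← hN, ← hM] at hkey
  have hbr : 0 < (phi v - phi u) * (F w - F u) - (F v - F u) * (phi w - phi u) := by
    nlinarith [hkey, hNpos, hMpos]
  have heq : (phi v - phi u) * (-1/σ) * (F w - F u)
      - (F v - F u) * ((phi w - phi u) * (-1/σ))
      = (-1/σ) * ((phi v - phi u) * (F w - F u) - (F v - F u) * (phi w - phi u)) := by ring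
  rw [heq]
  exact mul_neg_of_neg_of_pos (div_neg_of_neg_of_pos (by norm_num) hσ) hbr
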